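/- Let n ∈ ℕ, let ε : Fin (2n) → ℤ take values in {1, −1} with Σ_{k<2n} ε(k) = 0, and let S(k) = Σ_{i<k} ε(i) denote the partial sums (with S(0) = 0). Let a, b : ℤ → ℝ be strictly positive functions and 0 < ν ≤ μ real numbers such that ν ≤ a(j)·b(j+1) ≤ μ for all j ∈ ℤ. Then νⁿ ≤ (∏_{k<2n, ε(k)=1} a(S(k))) · (∏_{k<2n, ε(k)=−1} b(S(k))) ≤ μⁿ. -/

import Mathlib

open Finset

private def Pw (a b : ℤ → ℝ) : ℤ → List ℤ → ℝ
  | _, [] => 1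
  | h, (e :: L) => (if e = 1 then a h else b h) * Pw a b (h + e) L

private lemma Pw_nil (a b : ℤ → ℝ) (h : ℤ) : Pw a b h [] = 1 := rfl

private lemma Pw_cons (a b : ℤ → ℝ) (h e : ℤ) (L : List ℤ) :
    Pw a b h (e :: L) = (if e = 1 then a h else b h) * Pw a b (h + e) L := rfl

private lemma Pw_append (a b : ℤ → ℝ) (A B : List ℤ) : ∀ h : ℤ,
    Pw a b h (A ++ B) = Pw a b h A * Pw a b (h + A.sum) B := by
  induction A with
  | nil => intro h; simp [Pw_nil]
  | cons e A ih =>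
    intro h
    rw [List.cons_append, Pw_cons, Pw_cons, ih, List.sum_cons, mul_assoc,
      show h + e + A.sum = h + (e + A.sum) by ring]

private lemma Pw_pos (a b : ℤ → ℝ) (ha : ∀ j, 0 < a j) (hb : ∀ j, 0 < b j) :
    ∀ (L : List ℤ) (h : ℤ), 0 < Pw a b h L := by
  intro L
  induction L with
  | nil => intro h; rw [Pw_nil]; norm_num
  | cons e L ih =>
    intro h
    rw [Pw_cons]
    exact mul_pos (by split <;> [exact ha h; exact hb h]) (ih _)

private lemma chain_or_split : ∀ (L : List ℤ) (x : ℤ),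
    (∀ e ∈ L, e = x) ∨ ∃ A u v B, x :: L = A ++ u :: v :: B ∧ u ≠ v := by
  intro L
  induction L with
  | nil => intro x; left; simp
  | cons y T ih =>
    intro x
    by_cases hxy : x = y
    · rcases ih y with h | ⟨A, u, v, B, hE, huv⟩
      · left
        intro e he
        rcases List.mem_cons.1 he with rfl | he2
        · exact hxy.symm
        · rw [h e he2, hxy]
      · right
        exact ⟨x :: A, u, v, B, by rw [hxy, hE, List.cons_append], huv⟩
    · right
      exact ⟨[], x, y, T, rfl, hxy⟩

private lemma key (a b : ℤ → ℝ) (ha : ∀ j, 0 < a j) (hb : ∀ j, 0 < b j)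
    (ν μ : ℝ) (hν : 0 < ν) (hνμ : ν ≤ μ)
    (hlow : ∀ j : ℤ, ν ≤ a j * b (j + 1)) (hhigh : ∀ j : ℤ, a j * b (j + 1) ≤ μ) :
    ∀ (n : ℕ) (L : List ℤ), (∀ e ∈ L, e = 1 ∨ e = -1) → L.sum = 0 →
      L.length = 2 * n → ∀ h : ℤ, ν ^ n ≤ Pw a b h L ∧ Pw a b h L ≤ μ ^ n := by
  intro n
  induction n with
  | zero =>
    intro L _ _ hlen h
    have : L = [] := List.length_eq_zero_iff.mp (by omega)
    subst this
    simp [Pw_nil]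
  | succ n ih =>
    intro L hv hs hlen h
    obtain ⟨e, T, rfl⟩ : ∃ e T, L = e :: T := by
      cases L with
      | nil => simp at hlen
      | cons e T => exact ⟨e, T, rfl⟩
    rcases chain_or_split T e with hall | ⟨A, u, v, B, hE, huv⟩
    · -- all entries equal e : contradiction with sum 0
      exfalso
      have hrep : e :: T = List.replicate (e :: T).length e :=
        List.eq_replicate_iff.mpr ⟨rfl, by
          intro x hx
          rcases List.mem_cons.1 hx with rfl | hx2
          · rfl
          · exact hall x hx2⟩
      rw [hrep, List.sum_replicate, hlen] at hs
      simp only [nsmul_eq_mul] at hs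
      rcases hv e List.mem_cons_self with rfl | rfl <;> simp at hs <;> omega
    · rw [hE] at hv hs hlen ⊢
      have hu : u = 1 ∨ u = -1 := hv u (by simp)
      have hvv : v = 1 ∨ v = -1 := hv v (by simp)
      have huvsum : u + v = 0 := by rcases hu with rfl | rfl <;> rcases hvv with rfl | rfl <;> omega
      set h' := h + A.sum with hh'
      set w : ℝ := (if u = 1 then a h' else b h') * (if v = 1 then a (h' + u) else b (h' + u)) with hw
      have hwbound : ν ≤ w ∧ w ≤ μ := by
        rcases hu with rfl | rfl
        · have hv1 : v = -1 := hvv.resolve_left (fun hh => huv hh.symm)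
          subst hv1
          simp only [hw, if_pos rfl, if_neg (by norm_num : (-1 : ℤ) ≠ 1)]
          exact ⟨hlow h', hhigh h'⟩
        · have hv1 : v = 1 := hvv.resolve_right (fun hh => huv hh.symm)
          subst hv1
          simp only [hw, if_neg (by norm_num : (-1 : ℤ) ≠ 1), if_pos rfl]
          have harg : h' + -1 + 1 = h' := by ring
          constructor
          · calc ν ≤ a (h' + -1) * b (h' + -1 + 1) := hlow _
              _ = b h' * a (h' + -1) := by rw [harg]; ring
          · calc b h' * a (h' + -1) = a (h' + -1) * b (h' + -1 + 1) := by rw [harg]; ring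
              _ ≤ μ := hhigh _
      have hwpos : 0 < w := lt_of_lt_of_le hν hwbound.1
      have hPL : Pw a b h (A ++ u :: v :: B) = Pw a b h (A ++ B) * w := by
        rw [Pw_append, Pw_append, Pw_cons, Pw_cons,
          show h + A.sum + u + v = h + A.sum by omega]
        simp only [← hh', hw]
        ring
      have hAB : ν ^ n ≤ Pw a b h (A ++ B) ∧ Pw a b h (A ++ B) ≤ μ ^ n := by
        apply ih
        · intro x hx
          apply hv
          rcases List.mem_append.1 hx with hx | hx
          · exact List.mem_append.2 (Or.inl hx)
          · simp [hx]
        · simp only [List.sum_append, List.sum_cons] at hs ⊢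
          omega
        · simp only [List.length_append, List.length_cons] at hlen ⊢
          omega
      have hABpos : 0 < Pw a b h (A ++ B) := Pw_pos a b ha hb _ _
      rw [hPL]
      constructor
      · calc ν ^ (n + 1) = ν ^ n * ν := by ring
          _ ≤ Pw a b h (A ++ B) * w :=
            mul_le_mul hAB.1 hwbound.1 hν.le hABpos.le
      · calc Pw a b h (A ++ B) * w ≤ μ ^ n * μ :=
            mul_le_mul hAB.2 hwbound.2 hwpos.le (pow_nonneg (hν.trans_le hνμ).le n)
          _ = μ ^ (n + 1) := by ring

private lemma Pw_eq_prod (a b : ℤ → ℝ) : ∀ (m : ℕ) (g : ℕ → ℤ) (h : ℤ),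
    Pw a b h (List.ofFn (fun i : Fin m => g i)) =
      ∏ k ∈ range m, (if g k = 1 then a (h + ∑ i ∈ range k, g i)
        else b (h + ∑ i ∈ range k, g i)) := by
  intro m
  induction m with
  | zero => intro g h; simp [Pw_nil]
  | succ m ih =>
    intro g h
    rw [List.ofFn_succ, Pw_cons, Finset.prod_range_succ']
    simp only [Fin.val_succ, Fin.val_zero]
    rw [ih (fun i => g (i + 1)) (h + g 0)]
    rw [mul_comm]
    congr 1
    · apply Finset.prod_congr rfl
      intro k _
      rw [Finset.sum_range_succ',
        show h + (∑ i ∈ range k, g (i + 1) + g 0) = h + g 0 + ∑ i ∈ range k, g (i + 1) by ring]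
    · simp; rfl

/-- **Reciprocal-characteristics product bound for bridges.**
Let `ε : Fin (2n) → ℤ` take values in `{1, −1}` with total sum `0`, and let
`S k = ∑_{i<k} ε i` be the partial sums.  If `0 < ν ≤ μ` and the positive jump
rates `a, b : ℤ → ℝ` satisfy `ν ≤ a(j) b(j+1) ≤ μ` for all `j`, then
`νⁿ ≤ (∏_{ε k = 1} a(S k)) (∏_{ε k = −1} b(S k)) ≤ μⁿ`. -/
theorem bridge_rate_product_bound (n : ℕ) (ε : Fin (2 * n) → ℤ)
    (hval : ∀ k, ε k = 1 ∨ ε k = -1) (hsum : ∑ k, ε k = 0)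
    (S : Fin (2 * n) → ℤ) (hS : ∀ k, S k = ∑ i ∈ univ.filter (fun i => i < k), ε i)
    (a b : ℤ → ℝ) (ha : ∀ j, 0 < a j) (hb : ∀ j, 0 < b j)
    (ν μ : ℝ) (hν : 0 < ν) (hνμ : ν ≤ μ)
    (hlow : ∀ j : ℤ, ν ≤ a j * b (j + 1)) (hhigh : ∀ j : ℤ, a j * b (j + 1) ≤ μ) :
    ν ^ n ≤ (∏ k ∈ univ.filter (fun k => ε k = 1), a (S k)) *
        ∏ k ∈ univ.filter (fun k => ε k = -1), b (S k) ∧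
      (∏ k ∈ univ.filter (fun k => ε k = 1), a (S k)) *
        ∏ k ∈ univ.filter (fun k => ε k = -1), b (S k) ≤ μ ^ n := by
  set g : ℕ → ℤ := fun i => if hi : i < 2 * n then ε ⟨i, hi⟩ else 1 with hg
  have hgε : (fun i : Fin (2 * n) => g i) = ε := by
    funext i
    simp [hg, i.isLt]
  -- partial sums agree
  have hT : ∀ k : Fin (2 * n), ∑ i ∈ range (k : ℕ), g i = S k := by
    intro k
    rw [hS k, Finset.sum_filter]
    have hfil : (range (2 * n)).filter (· < (k : ℕ)) = range (k : ℕ) := by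
      ext x
      simp only [mem_filter, mem_range]
      constructor
      · rintro ⟨_, hx⟩; exact hx
      · intro hx; exact ⟨hx.trans k.isLt, hx⟩
    calc ∑ i ∈ range (k : ℕ), g i = ∑ i ∈ (range (2 * n)).filter (· < (k : ℕ)), g i := by
          rw [hfil]
      _ = ∑ i ∈ range (2 * n), if i < (k : ℕ) then g i else 0 := Finset.sum_filter _ _
      _ = ∑ i : Fin (2 * n), if (i : ℕ) < (k : ℕ) then g (i : ℕ) else 0 :=
          (Fin.sum_univ_eq_sum_range _ _).symm
      _ = ∑ i : Fin (2 * n), if i < k then ε i else 0 := by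
          apply Finset.sum_congr rfl
          intro i _
          have hgi : g (i : ℕ) = ε i := by
            simp only [hg]
            rw [dif_pos i.isLt]
          rw [hgi]
          simp only [Fin.lt_def]
  -- rewrite product as a single product over univ
  set F : Fin (2 * n) → ℝ := fun k => if ε k = 1 then a (S k) else b (S k) with hF
  have hsplit : (∏ k ∈ univ.filter (fun k => ε k = 1), a (S k)) *
      ∏ k ∈ univ.filter (fun k => ε k = -1), b (S k) = ∏ k, F k := by
    rw [← Finset.prod_filter_mul_prod_filter_not univ (fun k => ε k = 1) F]
    congr 1
    · apply Finset.prod_congr rfl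
      intro k hk
      show a (S k) = if ε k = 1 then a (S k) else b (S k)
      rw [if_pos (mem_filter.1 hk).2]
    · rw [show univ.filter (fun k => ε k = -1) = univ.filter (fun k => ¬ε k = 1) by
        apply Finset.filter_congr
        intro k _
        rcases hval k with h | h <;> rw [h] <;> norm_num]
      apply Finset.prod_congr rfl
      intro k hk
      show b (S k) = if ε k = 1 then a (S k) else b (S k)
      rw [if_neg (mem_filter.1 hk).2]
  have hPw : Pw a b 0 (List.ofFn (fun i : Fin (2 * n) => g i)) = ∏ k, F k := by
    rw [Pw_eq_prod]
    rw [← Fin.prod_univ_eq_prod_range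
      (fun k => if g k = 1 then a (0 + ∑ i ∈ range k, g i) else b (0 + ∑ i ∈ range k, g i))]
    apply Finset.prod_congr rfl
    intro k _
    have h1 : g (k : ℕ) = ε k := by simp [hg, k.isLt]
    show _ = if ε k = 1 then a (S k) else b (S k)
    rw [h1]
    simp only [zero_add, hT k]
  have hbounds := key a b ha hb ν μ hν hνμ hlow hhigh n
    (List.ofFn (fun i : Fin (2 * n) => g i))
    (by
      intro e he
      obtain ⟨i, hi⟩ := List.mem_ofFn.1 he
      rw [← hi]
      simpa [hg, i.isLt] using hval i)
    (by rw [List.sum_ofFn, hgε]; exact hsum)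
    (by simp) 0
  rw [hPw] at hbounds
  rw [hsplit]
  exact hbounds
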